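/- Let τ and σ be π-compatible topologies on a set X. Then a subset A ⊆ X has the Baire property in (X, τ) if and only if it has the Baire property in (X, σ). -/
import Mathlib


open Topology Set

/-- Topologies `τ` and `σ` on `X` are π-compatible if each is a π-network for the
other: every nonempty open set of either topology contains a nonempty open set of
the other topology. -/
def PiCompatible {X : Type*} (τ σ : TopologicalSpace X) : Prop :=
  (∀ O : Set X, IsOpen[σ] O → O.Nonempty → ∃ V : Set X, IsOpen[τ] V ∧ V.Nonempty ∧ V ⊆ O) ∧
  (∀ O : Set X, IsOpen[τ] O → O.Nonempty → ∃ V : Set X, IsOpen[σ] V ∧ V.Nonempty ∧ V ⊆ O)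

/-- A subset `A` has the Baire property in `(X, τ)` if `A = (O \ M) ∪ N` for some
`τ`-open set `O` and `τ`-meager sets `M`, `N`. -/
def HasBaireProp {X : Type*} (τ : TopologicalSpace X) (A : Set X) : Prop :=
  ∃ O M N : Set X, IsOpen[τ] O ∧ @IsMeagre X τ M ∧ @IsMeagre X τ N ∧ A = (O \ M) ∪ N

section helpers

variable {X : Type*}

lemma piCompatible_symm {τ σ : TopologicalSpace X} (h : PiCompatible τ σ) :
    PiCompatible σ τ := ⟨h.2, h.1⟩

/-- Characterization of nowhere dense sets via open sets. -/
lemma nwd_iff (τ : TopologicalSpace X) (s : Set X) :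
    @IsNowhereDense X τ s ↔
      ∀ U : Set X, IsOpen[τ] U → U.Nonempty → ∃ W : Set X,
        IsOpen[τ] W ∧ W.Nonempty ∧ W ⊆ U ∧ W ∩ s = ∅ := by
  letI := τ
  constructor
  · intro hs U hU hUne
    refine ⟨U \ closure s, hU.sdiff isClosed_closure, ?_, diff_subset, ?_⟩
    · rcases (U \ closure s).eq_empty_or_nonempty with he | hne
      · exfalso
        have hsub : U ⊆ closure s := by
          intro x hx
          by_contra hxc
          exact (Set.eq_empty_iff_forall_notMem.mp he x) ⟨hx, hxc⟩
        have : U ⊆ interior (closure s) := hU.subset_interior_iff.mpr hsub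
        rw [hs] at this
        exact hUne.ne_empty (Set.subset_empty_iff.mp this)
      · exact hne
    · apply Set.eq_empty_iff_forall_notMem.mpr
      rintro x ⟨⟨_, hxc⟩, hxs⟩
      exact hxc (subset_closure hxs)
  · intro H
    rw [IsNowhereDense]
    by_contra hne
    obtain ⟨W, hW, hWne, hWsub, hWs⟩ :=
      H (interior (closure s)) isOpen_interior (Set.nonempty_iff_ne_empty.mpr hne)
    have hWcl : W ∩ closure s = ∅ := by
      have : closure s ⊆ Wᶜ := by
        apply closure_minimal _ (hW.isClosed_compl)
        intro x hx hxW
        exact (Set.eq_empty_iff_forall_notMem.mp hWs x) ⟨hxW, hx⟩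
      apply Set.eq_empty_iff_forall_notMem.mpr
      rintro x ⟨hxW, hxc⟩
      exact this hxc hxW
    obtain ⟨x, hx⟩ := hWne
    exact (Set.eq_empty_iff_forall_notMem.mp hWcl x)
      ⟨hx, interior_subset (hWsub hx)⟩

lemma nwd_transfer {τ σ : TopologicalSpace X} (h : PiCompatible τ σ) {s : Set X}
    (hs : @IsNowhereDense X τ s) : @IsNowhereDense X σ s := by
  rw [nwd_iff] at hs ⊢
  intro U hU hUne
  obtain ⟨V, hV, hVne, hVU⟩ := h.1 U hU hUne
  obtain ⟨W, hW, hWne, hWV, hWs⟩ := hs V hV hVne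
  obtain ⟨W', hW', hW'ne, hW'W⟩ := h.2 W hW hWne
  exact ⟨W', hW', hW'ne, hW'W.trans (hWV.trans hVU),
    Set.subset_empty_iff.mp ((Set.inter_subset_inter_left s hW'W).trans hWs.subset)⟩

lemma nwd_isMeagre {τ : TopologicalSpace X} {s : Set X}
    (hs : @IsNowhereDense X τ s) : @IsMeagre X τ s := by
  letI := τ
  rw [isMeagre_iff_countable_union_isNowhereDense]
  exact ⟨{s}, by simpa using hs, Set.countable_singleton s, by simp⟩

lemma meagre_union {τ : TopologicalSpace X} {s t : Set X}
    (hs : @IsMeagre X τ s) (ht : @IsMeagre X τ t) : @IsMeagre X τ (s ∪ t) := by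
  letI := τ
  rw [IsMeagre, Set.compl_union]
  exact Filter.inter_mem hs ht

lemma meagre_transfer {τ σ : TopologicalSpace X} (h : PiCompatible τ σ) {s : Set X}
    (hs : @IsMeagre X τ s) : @IsMeagre X σ s := by
  rw [@isMeagre_iff_countable_union_isNowhereDense X τ] at hs
  rw [@isMeagre_iff_countable_union_isNowhereDense X σ]
  obtain ⟨S, hnwd, hc, hsub⟩ := hs
  exact ⟨S, fun t htS => nwd_transfer h (hnwd t htS), hc, hsub⟩

/-- A `τ`-open set has the Baire property with respect to `σ`. -/
lemma open_hasBaireProp {τ σ : TopologicalSpace X} (h : PiCompatible τ σ) {O : Set X}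
    (hO : IsOpen[τ] O) : HasBaireProp σ O := by
  classical
  -- M' := σ-closure of O minus O is τ-nowhere dense, hence σ-meagre.
  set C := @closure X σ O with hC
  have hM'τ : @IsNowhereDense X τ (C \ O) := by
    rw [nwd_iff]
    intro U hU hUne
    rcases (U ∩ O).eq_empty_or_nonempty with he | hne
    · -- U misses O; shrink to σ-open V ⊆ U, which then misses C, shrink back to τ-open.
      obtain ⟨V, hV, hVne, hVU⟩ := h.2 U hU hUne
      have hVC : V ∩ C = ∅ := by
        have hVO : V ∩ O = ∅ :=
          Set.subset_empty_iff.mp ((Set.inter_subset_inter_left O hVU).trans he.subset)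
        have : C ⊆ Vᶜ := by
          letI := σ
          apply closure_minimal _ hV.isClosed_compl
          intro x hxO hxV
          exact (Set.eq_empty_iff_forall_notMem.mp hVO x) ⟨hxV, hxO⟩
        apply Set.eq_empty_iff_forall_notMem.mpr
        rintro x ⟨hxV, hxC⟩
        exact this hxC hxV
      obtain ⟨W, hW, hWne, hWV⟩ := h.1 V hV hVne
      refine ⟨W, hW, hWne, hWV.trans hVU, ?_⟩
      apply Set.subset_empty_iff.mp
      intro x ⟨hxW, hxC, _⟩
      exact (Set.eq_empty_iff_forall_notMem.mp hVC x) ⟨hWV hxW, hxC⟩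
    · refine ⟨U ∩ O, @IsOpen.inter X τ _ _ hU hO, hne, Set.inter_subset_left, ?_⟩
      apply Set.eq_empty_iff_forall_notMem.mpr
      rintro x ⟨⟨_, hxO⟩, _, hxnO⟩
      exact hxnO hxO
  have hM' : @IsMeagre X σ (C \ O) := nwd_isMeagre (nwd_transfer h hM'τ)
  -- N' := O minus σ-interior of C is contained in C \ interior C, σ-nowhere dense.
  set U := @interior X σ C with hUdef
  have hN'nwd : @IsNowhereDense X σ (C \ U) := by
    letI := σ
    have hcl : IsClosed C := isClosed_closure
    have : IsNowhereDense (frontier C) := isClosed_frontier.isNowhereDense_iff.mpr <| by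
      rw [interior_frontier hcl]
    apply nwd_iff σ _ |>.mpr
    rw [nwd_iff] at this
    intro V hV hVne
    obtain ⟨W, hW, hWne, hWV, hWf⟩ := this V hV hVne
    refine ⟨W, hW, hWne, hWV, ?_⟩
    have hsub : C \ U ⊆ frontier C := by
      rw [frontier, hcl.closure_eq]
    exact Set.subset_empty_iff.mp
      ((Set.inter_subset_inter_right W hsub).trans hWf.subset)
  have hN' : @IsMeagre X σ (O \ U) := by
    letI := σ
    exact (nwd_isMeagre hN'nwd).mono (Set.diff_subset_diff_left subset_closure)
  refine ⟨U, C \ O, O \ U, isOpen_interior, hM', hN', ?_⟩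
  have hUC : U ⊆ C := interior_subset
  ext x
  constructor
  · intro hxO
    by_cases hxU : x ∈ U
    · exact Or.inl ⟨hxU, fun hx => hx.2 hxO⟩
    · exact Or.inr ⟨hxO, hxU⟩
  · rintro (⟨hxU, hxn⟩ | ⟨hxO, _⟩)
    · by_contra hxO
      exact hxn ⟨hUC hxU, hxO⟩
    · exact hxO

lemma hasBaireProp_transfer {τ σ : TopologicalSpace X} (h : PiCompatible τ σ) {A : Set X}
    (hA : HasBaireProp τ A) : HasBaireProp σ A := by
  obtain ⟨O, M, N, hO, hM, hN, hAeq⟩ := hA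
  obtain ⟨U, M', N', hU, hM', hN', hOeq⟩ := open_hasBaireProp h hO
  refine ⟨U, M' ∪ M, (N' \ M) ∪ N, hU,
    meagre_union hM' (meagre_transfer h hM),
    meagre_union (hN'.mono Set.diff_subset) (meagre_transfer h hN), ?_⟩
  · rw [hAeq, hOeq]
    ext x
    simp only [Set.mem_union, Set.mem_diff, Set.mem_union]
    tauto

end helpers

theorem stmt_8 {X : Type*} (τ σ : TopologicalSpace X) (h : PiCompatible τ σ) :
    ∀ A : Set X, HasBaireProp τ A ↔ HasBaireProp σ A := by
  intro A
  exact ⟨hasBaireProp_transfer h, hasBaireProp_transfer (piCompatible_symm h)⟩
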